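/- arXiv:1710.00538 — 2 statements merged into one kernel-verified Lean document; each statement's English description precedes it below -/
import Mathlib

section
/- For every ρ ≥ 0 and m > 0, j_m(ρ) ≤ K_cl ρ^{4/3} + (9/16) m² K_cl^{-1} ρ^{2/3}, where K_cl = (3/4)(6π²/q)^{1/3}. -/
open MeasureTheory Real

noncomputable def jm (q m ρ : ℝ) : ℝ :=
  (q / (2 * π) ^ 3) *
    ∫ p in Metric.ball (0 : EuclideanSpace ℝ (Fin 3)) ((6 * π ^ 2 * ρ / q) ^ ((1:ℝ)/3)),
      Real.sqrt (‖p‖ ^ 2 + m ^ 2)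

noncomputable def jmTilde (q m ρ : ℝ) : ℝ :=
  (q / (2 * π) ^ 3) *
    ∫ p in Metric.ball (0 : EuclideanSpace ℝ (Fin 3)) ((6 * π ^ 2 * ρ / q) ^ ((1:ℝ)/3)),
      (Real.sqrt (‖p‖ ^ 2 + m ^ 2))⁻¹

noncomputable def Kcl (q : ℝ) : ℝ := (3/4) * (6 * π ^ 2 / q) ^ ((1:ℝ)/3)

open Set in
lemma volume_unit_ball_dim3 :
    (volume (Metric.ball (0 : EuclideanSpace ℝ (Fin 3)) 1)).toReal = 4 * π / 3 := by
  rw [EuclideanSpace.volume_ball]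
  have h32 : ((3:ℝ)/2) ≠ 0 := by norm_num
  have h12 : ((1:ℝ)/2) ≠ 0 := by norm_num
  have hΓ : Real.Gamma ((Fintype.card (Fin 3) : ℝ) / 2 + 1) = (3/4) * Real.sqrt π := by
    simp only [Fintype.card_fin]
    have : ((3:ℕ):ℝ)/2 + 1 = (3/2) + 1 := by norm_num
    rw [this, Real.Gamma_add_one h32]
    have : (3/2 : ℝ) = (1/2) + 1 := by norm_num
    rw [this, Real.Gamma_add_one h12, Real.Gamma_one_half_eq]
    ring
  rw [hΓ]
  have hs : Real.sqrt π ^ Fintype.card (Fin 3) = π * Real.sqrt π := by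
    simp only [Fintype.card_fin]
    rw [pow_succ, sq_sqrt Real.pi_pos.le]
  rw [hs]
  have hsp : (0:ℝ) < Real.sqrt π := Real.sqrt_pos.mpr Real.pi_pos
  have : π * Real.sqrt π / ((3/4) * Real.sqrt π) = 4 * π / 3 := by
    field_simp
  rw [this]
  simp [ENNReal.toReal_ofReal (by positivity : (0:ℝ) ≤ 4*π/3)]

open Set in
lemma ball_integral_le (R m : ℝ) (hm : 0 < m) (hR : 0 < R) :
    ∫ p in Metric.ball (0 : EuclideanSpace ℝ (Fin 3)) R, Real.sqrt (‖p‖ ^ 2 + m ^ 2)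
      ≤ π * R ^ 4 + π * m ^ 2 * R ^ 2 := by
  set f : ℝ → ℝ := Set.indicator (Set.Iio R) (fun y => Real.sqrt (y ^ 2 + m ^ 2)) with hf
  have h1 : ∫ p in Metric.ball (0 : EuclideanSpace ℝ (Fin 3)) R, Real.sqrt (‖p‖ ^ 2 + m ^ 2)
      = ∫ p : EuclideanSpace ℝ (Fin 3), f ‖p‖ := by
    rw [← integral_indicator measurableSet_ball]
    congr 1
    ext p
    by_cases h : ‖p‖ < R
    · rw [Set.indicator_of_mem (by simpa [mem_ball_zero_iff] using h), hf,
        Set.indicator_of_mem (by simpa using h)]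
    · rw [Set.indicator_of_notMem (by simpa [mem_ball_zero_iff] using h), hf,
        Set.indicator_of_notMem (by simpa using h)]
  rw [h1, integral_fun_norm_addHaar volume f]
  have hdim : Module.finrank ℝ (EuclideanSpace ℝ (Fin 3)) = 3 := by
    simp [finrank_euclideanSpace]
  rw [hdim]
  rw [measureReal_def, volume_unit_ball_dim3]
  have h2 : ∫ y in Ioi (0:ℝ), y ^ (3-1) • f y
      = ∫ y in Ioo (0:ℝ) R, y ^ 2 * Real.sqrt (y ^ 2 + m ^ 2) := by
    have : ∀ y : ℝ, y ^ (3-1) • f y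
        = Set.indicator (Set.Iio R) (fun y => y ^ 2 * Real.sqrt (y ^ 2 + m ^ 2)) y := by
      intro y
      by_cases h : y ∈ Iio R
      · rw [hf, Set.indicator_of_mem h, Set.indicator_of_mem h]; simp
      · rw [hf, Set.indicator_of_notMem h, Set.indicator_of_notMem h]; simp
    simp_rw [this]
    rw [setIntegral_indicator measurableSet_Iio, Set.Ioi_inter_Iio]
  rw [h2]
  have hcont : Continuous fun y : ℝ => y ^ 2 * Real.sqrt (y ^ 2 + m ^ 2) := by
    fun_prop
  have hcont2 : Continuous fun y : ℝ => y ^ 3 + m ^ 2 * y / 2 := by fun_prop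
  have hmono : ∫ y in Ioo (0:ℝ) R, y ^ 2 * Real.sqrt (y ^ 2 + m ^ 2)
      ≤ ∫ y in Ioo (0:ℝ) R, (y ^ 3 + m ^ 2 * y / 2) := by
    apply setIntegral_mono_on
    · exact (hcont.integrableOn_Icc (a := 0) (b := R)).mono_set Set.Ioo_subset_Icc_self
    · exact (hcont2.integrableOn_Icc (a := 0) (b := R)).mono_set Set.Ioo_subset_Icc_self
    · exact measurableSet_Ioo
    · intro y hy
      obtain ⟨hy0, hyR⟩ := hy
      have key : Real.sqrt (y ^ 2 + m ^ 2) ≤ y + m ^ 2 / (2 * y) := by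
        rw [show y + m ^ 2 / (2*y) = Real.sqrt ((y + m ^ 2 / (2*y))^2) from
          (Real.sqrt_sq (by positivity)).symm]
        apply Real.sqrt_le_sqrt
        have expand : (y + m ^ 2 / (2 * y)) ^ 2 = y ^ 2 + m ^ 2 + (m ^ 2 / (2 * y)) ^ 2 := by
          field_simp; ring
        rw [expand]
        nlinarith [sq_nonneg (m ^ 2 / (2 * y))]
      calc y ^ 2 * Real.sqrt (y ^ 2 + m ^ 2) ≤ y ^ 2 * (y + m ^ 2 / (2 * y)) := by
            apply mul_le_mul_of_nonneg_left key (by positivity)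
        _ = y ^ 3 + m ^ 2 * y / 2 := by field_simp
  have heval : ∫ y in Ioo (0:ℝ) R, (y ^ 3 + m ^ 2 * y / 2) = R ^ 4 / 4 + m ^ 2 * R ^ 2 / 4 := by
    rw [← integral_Ioc_eq_integral_Ioo, ← intervalIntegral.integral_of_le hR.le]
    rw [intervalIntegral.integral_add (by apply Continuous.intervalIntegrable; fun_prop)
      (by apply Continuous.intervalIntegrable; fun_prop)]
    simp_rw [show ∀ x : ℝ, m ^ 2 * x / 2 = (m ^ 2 / 2) * x from fun x => by ring]
    rw [integral_pow, intervalIntegral.integral_const_mul, integral_id]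
    ring
  calc (3:ℕ) • (4 * π / 3) • ∫ y in Ioo (0:ℝ) R, y ^ 2 * Real.sqrt (y ^ 2 + m ^ 2)
      ≤ (3:ℕ) • (4 * π / 3) • ∫ y in Ioo (0:ℝ) R, (y ^ 3 + m ^ 2 * y / 2) := by
        apply smul_le_smul_of_nonneg_left ?_ (by norm_num)
        exact smul_le_smul_of_nonneg_left hmono (by positivity)
    _ = π * R ^ 4 + π * m ^ 2 * R ^ 2 := by
        rw [heval]; simp only [nsmul_eq_mul, smul_eq_mul]; push_cast; ring

theorem jm_le_Kcl_add_sub (q : ℕ) (hq : 1 ≤ q) (m ρ : ℝ) (hm : 0 < m) (hρ : 0 ≤ ρ) :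
    jm q m ρ ≤ Kcl q * ρ ^ ((4:ℝ)/3) + (9/16) * m ^ 2 * (Kcl q)⁻¹ * ρ ^ ((2:ℝ)/3) := by
  have hqpos : (0:ℝ) < (q:ℝ) := by exact_mod_cast hq
  have hπ : (0:ℝ) < π := Real.pi_pos
  set b : ℝ := 6 * π ^ 2 / (q:ℝ) with hb_def
  have hb : 0 < b := by positivity
  set a : ℝ := b ^ ((1:ℝ)/3) with ha_def
  have ha : 0 < a := Real.rpow_pos_of_pos hb _
  have ha3 : a ^ 3 = b := by
    rw [ha_def, ← Real.rpow_natCast (b ^ ((1:ℝ)/3)) 3, ← Real.rpow_mul hb.le]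
    norm_num
  set r : ℝ := ρ ^ ((1:ℝ)/3) with hr_def
  have hr : 0 ≤ r := Real.rpow_nonneg hρ _
  have hρ4 : ρ ^ ((4:ℝ)/3) = r ^ 4 := by
    rw [hr_def, ← Real.rpow_natCast (ρ ^ ((1:ℝ)/3)) 4, ← Real.rpow_mul hρ]
    norm_num
  have hρ2 : ρ ^ ((2:ℝ)/3) = r ^ 2 := by
    rw [hr_def, ← Real.rpow_natCast (ρ ^ ((1:ℝ)/3)) 2, ← Real.rpow_mul hρ]
    norm_num
  have hR : (6 * π ^ 2 * ρ / (q:ℝ)) ^ ((1:ℝ)/3) = a * r := by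
    rw [show 6 * π ^ 2 * ρ / (q:ℝ) = b * ρ from by rw [hb_def]; ring,
      Real.mul_rpow hb.le hρ]
  have hK : Kcl (q:ℝ) = (3/4) * a := by rw [Kcl]
  rcases eq_or_lt_of_le hρ with hρ0 | hρ0
  · -- ρ = 0 : ball has radius 0, integral is 0
    have hr0 : r = 0 := by
      rw [hr_def, ← hρ0, Real.zero_rpow (by norm_num)]
    have hR0 : (6 * π ^ 2 * ρ / (q:ℝ)) ^ ((1:ℝ)/3) = 0 := by rw [hR, hr0, mul_zero]
    rw [jm, hR0, hρ4, hρ2, hr0]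
    simp
  have hiball := ball_integral_le ((6 * π ^ 2 * ρ / (q:ℝ)) ^ ((1:ℝ)/3)) m hm
    (by rw [hR]; positivity)
  have hcoef : (0:ℝ) ≤ (q:ℝ) / (2 * π) ^ 3 := by positivity
  calc jm q m ρ ≤ ((q:ℝ) / (2 * π) ^ 3) *
        (π * ((6 * π ^ 2 * ρ / (q:ℝ)) ^ ((1:ℝ)/3)) ^ 4
          + π * m ^ 2 * ((6 * π ^ 2 * ρ / (q:ℝ)) ^ ((1:ℝ)/3)) ^ 2) := by
        rw [jm]
        exact mul_le_mul_of_nonneg_left hiball hcoef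
    _ = Kcl q * ρ ^ ((4:ℝ)/3) + (9/16) * m ^ 2 * (Kcl q)⁻¹ * ρ ^ ((2:ℝ)/3) := by
        rw [hR, hK, hρ4, hρ2]
        have hq_eq : (q:ℝ) = 6 * π ^ 2 / a ^ 3 := by
          rw [ha3, hb_def]; field_simp
        rw [hq_eq]
        field_simp
        ring
end

section
/- For every ρ ≥ 0 and m > 0, the inequalities j_m(ρ) ≤ ρ √(η² + m²) ≤ (4/3) j_m(ρ) hold, where η = (6π²ρ/q)^{1/3}. -/
open MeasureTheory Real

open Set

noncomputable abbrev E3 := EuclideanSpace ℝ (Fin 3)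

lemma vol_unit : (volume (Metric.ball (0 : E3) 1)).toReal = 4 * π / 3 := by
  rw [EuclideanSpace.volume_ball]
  have h52 : Real.Gamma ((3:ℕ) / 2 + 1) = 3 * Real.sqrt π / 4 := by
    have : ((3:ℕ) : ℝ) / 2 + 1 = (3/2 : ℝ) + 1 := by norm_num
    rw [this, Real.Gamma_add_one (by norm_num)]
    have : (3/2 : ℝ) = 1/2 + 1 := by norm_num
    rw [this, Real.Gamma_add_one (by norm_num), Real.Gamma_one_half_eq]
    ring
  have hπ : 0 < π := Real.pi_pos
  have hsq : Real.sqrt π ^ (3:ℕ) = π * Real.sqrt π := by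
    have := Real.sq_sqrt hπ.le
    nlinarith [Real.sqrt_nonneg π]
  simp only [Fintype.card_fin, ENNReal.ofReal_one, one_pow, one_mul, Nat.cast_ofNat] at h52 ⊢
  rw [h52]
  rw [ENNReal.toReal_ofReal (by positivity)]
  rw [hsq]
  have hs : (0:ℝ) < Real.sqrt π := Real.sqrt_pos.2 hπ
  field_simp

lemma polar3 {η : ℝ} (hη : 0 ≤ η) (g : ℝ → ℝ) :
    ∫ x in Metric.ball (0 : E3) η, g ‖x‖ =
      (4 * π) * ∫ y in (0:ℝ)..η, y ^ 2 * g y := by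
  have h1 : ∫ x in Metric.ball (0 : E3) η, g ‖x‖
      = ∫ x : E3, (Set.indicator (Iio η) g) ‖x‖ := by
    rw [← integral_indicator measurableSet_ball]
    congr 1
    ext x
    by_cases h : ‖x‖ < η <;>
      simp [Set.indicator_apply, Metric.mem_ball, dist_zero_right, h]
  rw [h1, integral_fun_norm_addHaar volume (Set.indicator (Iio η) g)]
  have hdim : Module.finrank ℝ E3 = 3 := by simp [finrank_euclideanSpace]
  rw [hdim, measureReal_def, vol_unit]
  have h2 : ∫ y in Ioi (0:ℝ), y ^ (3 - 1) • (Set.indicator (Iio η) g) y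
      = ∫ y in (0:ℝ)..η, y ^ 2 * g y := by
    have : ∀ y ∈ Ioi (0:ℝ), y ^ (3 - 1) • (Set.indicator (Iio η) g) y
        = Set.indicator (Iio η) (fun y => y ^ 2 * g y) y := by
      intro y _
      by_cases h : y ∈ Iio η <;> simp [h]
    rw [setIntegral_congr_fun measurableSet_Ioi this,
      setIntegral_indicator measurableSet_Iio, Set.Ioi_inter_Iio,
      intervalIntegral.integral_of_le hη, integral_Ioc_eq_integral_Ioo]
  rw [h2]
  simp only [nsmul_eq_mul, smul_eq_mul]
  ring

private theorem jm_aux (q : ℕ) (hq : 1 ≤ q) (m ρ : ℝ) (hm : 0 < m) (hρ : 0 ≤ ρ)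
    (jm : ℝ)
    (hjm : jm = ((q:ℝ) / (2 * π) ^ 3) *
      ∫ p in Metric.ball (0 : E3) ((6 * π ^ 2 * ρ / q) ^ ((1:ℝ)/3)),
        Real.sqrt (‖p‖ ^ 2 + m ^ 2)) :
    jm ≤ ρ * Real.sqrt (((6 * π ^ 2 * ρ / q) ^ ((1:ℝ)/3)) ^ 2 + m ^ 2) ∧
      ρ * Real.sqrt (((6 * π ^ 2 * ρ / q) ^ ((1:ℝ)/3)) ^ 2 + m ^ 2) ≤ (4/3) * jm := by
  have hπ : 0 < π := Real.pi_pos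
  have hq' : (0:ℝ) < q := by exact_mod_cast Nat.lt_of_lt_of_le Nat.zero_lt_one hq
  set η : ℝ := (6 * π ^ 2 * ρ / q) ^ ((1:ℝ)/3) with hηdef
  have hbase : 0 ≤ 6 * π ^ 2 * ρ / q := by positivity
  have hη0 : 0 ≤ η := Real.rpow_nonneg hbase _
  have hη3 : η ^ 3 = 6 * π ^ 2 * ρ / q := by
    rw [hηdef, ← Real.rpow_natCast _ 3, ← Real.rpow_mul hbase]
    norm_num
  have hρeq : ρ = q * η ^ 3 / (6 * π ^ 2) := by
    rw [hη3]; field_simp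
  set S : ℝ := η ^ 2 + m ^ 2 with hSdef
  have hS0 : 0 < S := by positivity
  set I : ℝ := ∫ y in (0:ℝ)..η, y ^ 2 * Real.sqrt (y ^ 2 + m ^ 2) with hIdef
  have hjmval : jm = q * I / (2 * π ^ 2) := by
    rw [hjm, polar3 hη0 (fun y => Real.sqrt (y ^ 2 + m ^ 2)), ← hIdef]
    field_simp
    ring
  -- integrability of the three 1D functions
  have hc1 : IntervalIntegrable (fun y => y ^ 2 * Real.sqrt (y ^ 2 + m ^ 2)) volume 0 η :=
    Continuous.intervalIntegrable
      ((continuous_pow 2).mul (((continuous_pow 2).add continuous_const).sqrt)) 0 η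
  have hc2 : IntervalIntegrable (fun y => y ^ 2 * Real.sqrt S) volume 0 η :=
    Continuous.intervalIntegrable ((continuous_pow 2).mul continuous_const) 0 η
  have hc3 : IntervalIntegrable (fun y => y ^ 3 / η * Real.sqrt S) volume 0 η :=
    Continuous.intervalIntegrable
      (((continuous_pow 3).div_const η).mul continuous_const) 0 η
  have hIub : I ≤ Real.sqrt S * η ^ 3 / 3 := by
    have hmono : ∀ y ∈ Set.uIcc (0:ℝ) η, y ^ 2 * Real.sqrt (y ^ 2 + m ^ 2)
        ≤ y ^ 2 * Real.sqrt S := by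
      intro y hy
      rw [Set.uIcc_of_le hη0] at hy
      have h1 : y ^ 2 + m ^ 2 ≤ S := by
        have : y ^ 2 ≤ η ^ 2 := by nlinarith [hy.1, hy.2]
        simp [hSdef]; linarith
      exact mul_le_mul_of_nonneg_left (Real.sqrt_le_sqrt h1) (by positivity)
    have := intervalIntegral.integral_mono_on hη0 hc1 hc2
      (fun y hy => hmono y (Set.mem_uIcc.2 (Or.inl ⟨hy.1, hy.2⟩)))
    calc I ≤ ∫ y in (0:ℝ)..η, y ^ 2 * Real.sqrt S := this
      _ = Real.sqrt S * η ^ 3 / 3 := by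
          rw [intervalIntegral.integral_mul_const, integral_pow]
          ring
  rcases eq_or_lt_of_le hρ with hρ0 | hρpos
  · -- ρ = 0
    have hηz : η = 0 := by
      rw [hηdef, ← hρ0]
      simp [Real.zero_rpow (by norm_num : (1:ℝ)/3 ≠ 0)]
    have hIz : I = 0 := by rw [hIdef, hηz, intervalIntegral.integral_same]
    rw [hjmval, hIz, ← hρ0]
    norm_num
  · have hηpos : 0 < η := by
      rw [hηdef]
      exact Real.rpow_pos_of_pos (by positivity) _
    have hIlb : Real.sqrt S * η ^ 3 / 4 ≤ I := by
      have hmono : ∀ y ∈ Set.uIcc (0:ℝ) η, y ^ 3 / η * Real.sqrt S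
          ≤ y ^ 2 * Real.sqrt (y ^ 2 + m ^ 2) := by
        intro y hy
        rw [Set.uIcc_of_le hη0] at hy
        have hy0 : 0 ≤ y := hy.1
        have hyη : y ≤ η := hy.2
        have key : y / η * Real.sqrt S ≤ Real.sqrt (y ^ 2 + m ^ 2) := by
          have h1 : y / η * Real.sqrt S = Real.sqrt ((y / η) ^ 2 * S) := by
            rw [Real.sqrt_mul (by positivity), Real.sqrt_sq (by positivity)]
          rw [h1]
          apply Real.sqrt_le_sqrt
          rw [div_pow, div_mul_eq_mul_div, div_le_iff₀ (by positivity)]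
          have : y ^ 2 * S = y ^ 2 * η ^ 2 + y ^ 2 * m ^ 2 := by rw [hSdef]; ring
          nlinarith [sq_nonneg m, mul_le_mul_of_nonneg_left
            (mul_self_le_mul_self hy0 hyη) (sq_nonneg m)]
        calc y ^ 3 / η * Real.sqrt S = y ^ 2 * (y / η * Real.sqrt S) := by ring
          _ ≤ y ^ 2 * Real.sqrt (y ^ 2 + m ^ 2) :=
            mul_le_mul_of_nonneg_left key (by positivity)
      have := intervalIntegral.integral_mono_on hη0 hc3 hc1
        (fun y hy => hmono y (Set.mem_uIcc.2 (Or.inl ⟨hy.1, hy.2⟩)))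
      calc Real.sqrt S * η ^ 3 / 4 = ∫ y in (0:ℝ)..η, y ^ 3 / η * Real.sqrt S := by
            simp only [div_mul_eq_mul_div, mul_comm]
            rw [intervalIntegral.integral_div, intervalIntegral.integral_mul_const,
              integral_pow]
            field_simp
            ring
        _ ≤ I := this
    constructor
    · rw [hjmval, hρeq]
      rw [div_mul_eq_mul_div, div_le_div_iff₀ (by positivity) (by positivity)]
      nlinarith [mul_nonneg (mul_nonneg hq'.le (sq_nonneg π)) (sub_nonneg.2 hIub)]
    · rw [hjmval, hρeq]
      rw [div_mul_eq_mul_div, ← mul_div_assoc, div_le_div_iff₀ (by positivity) (by positivity)]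
      nlinarith [mul_nonneg (mul_nonneg hq'.le (sq_nonneg π)) (sub_nonneg.2 hIlb)]

theorem jm_le_rho_sqrt_le (q : ℕ) (hq : 1 ≤ q) (m ρ : ℝ) (hm : 0 < m) (hρ : 0 ≤ ρ) :
    jm q m ρ ≤ ρ * Real.sqrt (((6 * π ^ 2 * ρ / q) ^ ((1:ℝ)/3)) ^ 2 + m ^ 2) ∧
      ρ * Real.sqrt (((6 * π ^ 2 * ρ / q) ^ ((1:ℝ)/3)) ^ 2 + m ^ 2) ≤ (4/3) * jm q m ρ := by
  exact jm_aux q hq m ρ hm hρ (jm q m ρ) rfl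
end
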